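/- Let V be a Whittaker module over R(f) with cyclic Whittaker vector w of type η, and let Z_V = Ann_{Z(R)}(V). Then the annihilator of w in R(f) equals R·Z_V + R·R_η(E). -/

import Mathlib

open Polynomial

inductive SmithGen : Type
  | E | F | H

open SmithGen in
inductive SmithRel (f : ℂ[X]) : FreeAlgebra ℂ SmithGen → FreeAlgebra ℂ SmithGen → Prop
  | ef : SmithRel f (FreeAlgebra.ι ℂ E * FreeAlgebra.ι ℂ F - FreeAlgebra.ι ℂ F * FreeAlgebra.ι ℂ E)
      (aeval (FreeAlgebra.ι ℂ H) f)
  | he : SmithRel f (FreeAlgebra.ι ℂ H * FreeAlgebra.ι ℂ E - FreeAlgebra.ι ℂ E * FreeAlgebra.ι ℂ H)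
      (FreeAlgebra.ι ℂ E)
  | hf : SmithRel f (FreeAlgebra.ι ℂ H * FreeAlgebra.ι ℂ F - FreeAlgebra.ι ℂ F * FreeAlgebra.ι ℂ H)
      (-FreeAlgebra.ι ℂ F)

/-- Smith's algebra `R(f)`, similar to `U(sl₂)`. -/
abbrev SmithAlgebra (f : ℂ[X]) : Type := RingQuot (SmithRel f)

noncomputable def SmithE (f : ℂ[X]) : SmithAlgebra f :=
  RingQuot.mkAlgHom ℂ (SmithRel f) (FreeAlgebra.ι ℂ SmithGen.E)

noncomputable def SmithF (f : ℂ[X]) : SmithAlgebra f :=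
  RingQuot.mkAlgHom ℂ (SmithRel f) (FreeAlgebra.ι ℂ SmithGen.F)

noncomputable def SmithH (f : ℂ[X]) : SmithAlgebra f :=
  RingQuot.mkAlgHom ℂ (SmithRel f) (FreeAlgebra.ι ℂ SmithGen.H)

/-- The Casimir element `Ω = 2FE + u(H+1)`. -/
noncomputable def SmithOmega (f u : ℂ[X]) : SmithAlgebra f :=
  2 * SmithF f * SmithE f + aeval (SmithH f) (u.comp (X + 1))

namespace SmithAux

variable (f : ℂ[X])

local notation "E" => SmithE f
local notation "F" => SmithF f
local notation "H" => SmithH f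

lemma rel_ef : E * F = F * E + aeval H f := by
  have h := RingQuot.mkAlgHom_rel ℂ (SmithRel.ef (f := f))
  rw [map_sub, map_mul, map_mul, ← aeval_algHom_apply, sub_eq_iff_eq_add] at h
  simp only [SmithE, SmithF, SmithH]
  rw [h]; abel

lemma rel_he : H * E = E * H + E := by
  have h := RingQuot.mkAlgHom_rel ℂ (SmithRel.he (f := f))
  rw [map_sub, map_mul, map_mul, sub_eq_iff_eq_add] at h
  simp only [SmithE, SmithF, SmithH]
  rw [h]; abel

lemma rel_hf : H * F = F * H - F := by
  have h := RingQuot.mkAlgHom_rel ℂ (SmithRel.hf (f := f))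
  rw [map_sub, map_mul, map_mul, map_neg, sub_eq_iff_eq_add] at h
  simp only [SmithE, SmithF, SmithH]
  rw [h]; abel

lemma rel_eh : E * H = (H - 1) * E := by
  rw [sub_mul, one_mul, rel_he]; abel

lemma rel_fh : F * H = (H + 1) * F := by
  rw [add_mul, one_mul, rel_hf]; abel

/-- helper: commuting with `x` implies commuting with `aeval x p`. -/
lemma commute_aeval {A : Type*} [Ring A] [Algebra ℂ A] {a x : A}
    (h : Commute a x) (p : ℂ[X]) : Commute a (aeval x p) := by
  induction p using Polynomial.induction_on with
  | C t => simpa [aeval_C, Commute, SemiconjBy] using (Algebra.commutes t a).symm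
  | add p q hp hq => simpa [map_add] using hp.add_right hq
  | monomial n t hp =>
      simp only [map_mul, aeval_C, aeval_X_pow, aeval_X, pow_succ, ← mul_assoc] at hp ⊢
      exact hp.mul_right h

lemma e_aeval (p : ℂ[X]) : E * aeval H p = aeval H (p.comp (X - 1)) * E := by
  induction p using Polynomial.induction_on with
  | C t => simp [aeval_C, Algebra.commutes]
  | add p q hp hq => simp only [map_add, add_comp, mul_add, add_mul, hp, hq]
  | monomial n t hp =>
      have e1 : (C t * X ^ (n+1) : ℂ[X]) = (C t * X ^ n) * X := by ring
      rw [e1, map_mul, aeval_X, ← mul_assoc, hp, mul_assoc, rel_eh]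
      simp [mul_comp, X_comp, map_mul, map_sub, mul_assoc]

lemma f_aeval (p : ℂ[X]) : F * aeval H p = aeval H (p.comp (X + 1)) * F := by
  induction p using Polynomial.induction_on with
  | C t => simp [aeval_C, Algebra.commutes]
  | add p q hp hq => simp only [map_add, add_comp, mul_add, add_mul, hp, hq]
  | monomial n t hp =>
      have e1 : (C t * X ^ (n+1) : ℂ[X]) = (C t * X ^ n) * X := by ring
      rw [e1, map_mul, aeval_X, ← mul_assoc, hp, mul_assoc, rel_fh]
      simp [mul_comp, X_comp, map_mul, map_add, mul_assoc]

lemma delta_aux : ∀ (n : ℕ) (g : ℂ[X]), g.natDegree ≤ n →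
    ∃ p : ℂ[X], p.comp (X + 1) - p = g := by
  intro n
  induction n with
  | zero =>
      intro g hg
      refine ⟨C (g.coeff 0) * X, ?_⟩
      conv_rhs => rw [Polynomial.eq_C_of_natDegree_le_zero hg]
      simp [mul_comp]
      ring
  | succ n ih =>
      intro g hg
      set a : ℂ := g.coeff (n+1) with ha
      set q : ℂ[X] := C (a / ((n : ℂ) + 2)) * X ^ (n+2) with hq
      set d : ℂ[X] := q.comp (X + 1) - q with hd
      have hdc : ∀ m : ℕ, d.coeff m =
          a / ((n : ℂ) + 2) * (((n+2).choose m : ℂ) - if m = n + 2 then 1 else 0) := by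
        intro m
        simp [hd, hq, mul_comp, coeff_X_add_one_pow, coeff_X_pow, mul_sub]
      have hn2 : ((n : ℂ) + 2) ≠ 0 := by
        have : (0:ℝ) < (n:ℝ) + 2 := by positivity
        intro h
        exact absurd (by exact_mod_cast congrArg Complex.re h) (ne_of_gt this)
      have hg' : (g - d).natDegree ≤ n := by
        rw [natDegree_le_iff_coeff_eq_zero]
        intro m hm
        rcases eq_or_lt_of_le (Nat.succ_le_of_lt hm) with h1 | h1
        · -- m = n + 1
          rw [coeff_sub, hdc, ← h1]
          have : ((n+2).choose (n+1) : ℂ) = (n : ℂ) + 2 := by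
            rw [Nat.choose_succ_self_right]
            push_cast; ring
          rw [if_neg (by omega), this, sub_zero, div_mul_cancel₀ _ hn2]
          ring
        · -- m ≥ n + 2
          have hgm : g.coeff m = 0 :=
            natDegree_le_iff_coeff_eq_zero.mp hg m (by omega)
          rcases eq_or_lt_of_le (Nat.succ_le_of_lt h1 : n + 2 ≤ m) with h2 | h2
          · rw [coeff_sub, hgm, hdc, if_pos h2.symm, ← h2, Nat.choose_self]
            simp
          · rw [coeff_sub, hgm, hdc, if_neg (by omega),
              Nat.choose_eq_zero_of_lt (by omega)]
            simp
      obtain ⟨p, hp⟩ := ih (g - d) hg'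
      refine ⟨p + q, ?_⟩
      rw [add_comp]
      linear_combination hp - hd

lemma exists_u : ∃ u : ℂ[X], u.comp (X + 1) = u + C 2 * f := by
  obtain ⟨p, hp⟩ := delta_aux (C 2 * f).natDegree (C 2 * f) le_rfl
  exact ⟨p, by linear_combination hp⟩

noncomputable def uP : ℂ[X] := (exists_u f).choose

lemma uP_spec : (uP f).comp (X + 1) = uP f + C 2 * f := (exists_u f).choose_spec

local notation "Ω" => SmithOmega f (uP f)

lemma hW2 : aeval H ((uP f).comp (X + 1)) = aeval H (uP f) + 2 * aeval H f := by
  rw [uP_spec, map_add, map_mul, aeval_C, map_ofNat]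

lemma omega_comm_E : E * Ω = Ω * E := by
  have h1 : E * aeval H ((uP f).comp (X + 1)) = aeval H (uP f) * E := by
    rw [e_aeval, Polynomial.comp_assoc]
    have : (X + 1 : ℂ[X]).comp (X - 1) = X := by
      simp [add_comp]
    rw [this, comp_X]
  have h3 : E * (2 * SmithF f * SmithE f) = 2 * (F * E * E) + 2 * (aeval H f * E) := by
    have e1 : E * (2 * SmithF f * SmithE f) = 2 * ((E * F) * E) := by noncomm_ring
    rw [e1, rel_ef]; noncomm_ring
  rw [SmithOmega, mul_add, add_mul, h3, h1, hW2]
  noncomm_ring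

lemma omega_comm_F : F * Ω = Ω * F := by
  have h1 : F * aeval H ((uP f).comp (X + 1)) =
      aeval H (((uP f).comp (X + 1)).comp (X + 1)) * F := f_aeval f _
  have h2 : ((uP f).comp (X + 1)).comp (X + 1) =
      (uP f).comp (X + 1) + C 2 * f.comp (X + 1) := by
    conv_lhs => rw [uP_spec]
    simp [add_comp, mul_comp]
  have h3 : Ω * F = 2 * (F * F * E) + 2 * (aeval H (f.comp (X+1)) * F)
      + aeval H ((uP f).comp (X + 1)) * F := by
    have e1 : Ω * F = 2 * (F * (E * F)) + aeval H ((uP f).comp (X + 1)) * F := by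
      rw [SmithOmega]; noncomm_ring
    rw [e1, rel_ef, mul_add, f_aeval]
    noncomm_ring
  rw [h3, SmithOmega, mul_add, h1, h2, map_add, map_mul, aeval_C, map_ofNat]
  noncomm_ring

lemma omega_comm_H : H * Ω = Ω * H := by
  have h1 : H * aeval H ((uP f).comp (X + 1)) = aeval H ((uP f).comp (X + 1)) * H :=
    (commute_aeval (Commute.refl H) _).eq
  have h2 : H * (F * E) = F * E * H := by
    rw [← mul_assoc, rel_hf, sub_mul, mul_assoc, rel_he, mul_add]
    noncomm_ring
  rw [SmithOmega, mul_add, add_mul, h1]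
  have e1 : H * (2 * SmithF f * SmithE f) = 2 * (H * (F * E)) := by noncomm_ring
  rw [e1, h2]
  noncomm_ring

lemma adjoin_EFH : Algebra.adjoin ℂ {SmithE f, SmithF f, SmithH f} = ⊤ := by
  rw [eq_top_iff]
  rintro x -
  obtain ⟨y, rfl⟩ := RingQuot.mkAlgHom_surjective ℂ (SmithRel f) x
  have hy : y ∈ Algebra.adjoin ℂ (Set.range (FreeAlgebra.ι ℂ (X := SmithGen))) := by
    rw [FreeAlgebra.adjoin_range_ι]; trivial
  have := Algebra.adjoin_mono (R := ℂ)
    (show (RingQuot.mkAlgHom ℂ (SmithRel f)) '' Set.range (FreeAlgebra.ι ℂ) ⊆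
      {SmithE f, SmithF f, SmithH f} by
        rintro _ ⟨_, ⟨g, rfl⟩, rfl⟩
        cases g <;> simp [SmithE, SmithF, SmithH])
  rw [← AlgHom.map_adjoin] at this
  exact this ⟨y, hy, rfl⟩

lemma omega_center : Ω ∈ Subalgebra.center ℂ (SmithAlgebra f) := by
  rw [Subalgebra.mem_center_iff]
  intro g
  have hg : g ∈ Subalgebra.centralizer ℂ ({Ω} : Set (SmithAlgebra f)) := by
    have : Algebra.adjoin ℂ {SmithE f, SmithF f, SmithH f} ≤
        Subalgebra.centralizer ℂ ({Ω} : Set (SmithAlgebra f)) := by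
      rw [Algebra.adjoin_le_iff]
      rintro x (rfl | rfl | rfl) <;>
        simp only [SetLike.mem_coe] <;>
        rw [Subalgebra.mem_centralizer_iff] <;>
        rintro _ rfl
      · exact (omega_comm_E f).symm
      · exact (omega_comm_F f).symm
      · exact (omega_comm_H f).symm
    exact this (by rw [adjoin_EFH]; trivial)
  rw [Subalgebra.mem_centralizer_iff] at hg
  exact (hg Ω rfl).symm

section
variable (N : Submodule ℂ (SmithAlgebra f))

/-- The left stabilizer of a `ℂ`-submodule of the algebra, as a subalgebra. -/
def leftStab : Subalgebra ℂ (SmithAlgebra f) where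
  carrier := {r | ∀ m ∈ N, r * m ∈ N}
  mul_mem' := fun {a b} ha hb m hm => by rw [mul_assoc]; exact ha _ (hb m hm)
  one_mem' := fun m hm => by rwa [one_mul]
  add_mem' := fun {a b} ha hb m hm => by rw [add_mul]; exact N.add_mem (ha m hm) (hb m hm)
  zero_mem' := fun m hm => by rw [zero_mul]; exact N.zero_mem
  algebraMap_mem' := fun t m hm => by rw [← Algebra.smul_def]; exact N.smul_mem t hm

lemma stab_top (h1 : (1 : SmithAlgebra f) ∈ N)
    (hE : ∀ m ∈ N, E * m ∈ N) (hF : ∀ m ∈ N, F * m ∈ N)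
    (hH : ∀ m ∈ N, H * m ∈ N) : ∀ r : SmithAlgebra f, r ∈ N := by
  have hle : Algebra.adjoin ℂ {SmithE f, SmithF f, SmithH f} ≤ leftStab f N := by
    rw [Algebra.adjoin_le_iff]
    rintro x (rfl | rfl | rfl) <;> [exact hE; exact hF; exact hH]
  intro r
  have hr : r ∈ leftStab f N := hle (by rw [adjoin_EFH]; trivial)
  simpa using hr 1 h1

end

section
variable (c : ℂ)

local notation "c₀" => algebraMap ℂ (SmithAlgebra f) c

/-- the left ideal generated by `E - c`, as a `ℂ`-submodule. -/
noncomputable def Isub : Submodule ℂ (SmithAlgebra f) :=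
  Submodule.span ℂ {x | ∃ r : SmithAlgebra f, x = r * (SmithE f - algebraMap ℂ _ c)}

/-- the `ℂ`-span of the elements `Ω^a p(H)`. -/
noncomputable def Psub : Submodule ℂ (SmithAlgebra f) :=
  Submodule.span ℂ
    {x | ∃ (a : ℕ) (p : ℂ[X]), x = SmithOmega f (uP f) ^ a * aeval (SmithH f) p}

lemma Isub_mul (g : SmithAlgebra f) : ∀ x ∈ Isub f c, g * x ∈ Isub f c := by
  intro x hx
  induction hx using Submodule.span_induction with
  | mem x hx => obtain ⟨r, rfl⟩ := hx; exact Submodule.subset_span ⟨g * r, by rw [mul_assoc]⟩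
  | zero => rw [mul_zero]; exact Submodule.zero_mem _
  | add x y _ _ hx hy => rw [mul_add]; exact Submodule.add_mem _ hx hy
  | smul a x _ hx => rw [mul_smul_comm]; exact Submodule.smul_mem _ a hx

lemma sup_mul (g : SmithAlgebra f)
    (hgen : ∀ (a : ℕ) (p : ℂ[X]), g * (Ω ^ a * aeval (SmithH f) p) ∈ Psub f ⊔ Isub f c) :
    ∀ x ∈ Psub f ⊔ Isub f c, g * x ∈ Psub f ⊔ Isub f c := by
  intro x hx
  obtain ⟨u₁, hu₁, u₂, hu₂, rfl⟩ := Submodule.mem_sup.mp hx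
  rw [mul_add]
  refine Submodule.add_mem _ ?_ (Submodule.mem_sup_right (Isub_mul f c g u₂ hu₂))
  clear hx hu₂ u₂
  induction hu₁ using Submodule.span_induction with
  | mem x hx => obtain ⟨a, p, rfl⟩ := hx; exact hgen a p
  | zero => rw [mul_zero]; exact Submodule.zero_mem _
  | add x y _ _ hx hy => rw [mul_add]; exact Submodule.add_mem _ hx hy
  | smul a x _ hx => rw [mul_smul_comm]; exact Submodule.smul_mem _ a hx

lemma omega_commute (g : SmithAlgebra f) : Commute g Ω :=
  Subalgebra.mem_center_iff.mp (omega_center f) g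

lemma sup_eq_top (hc : c ≠ 0) : ∀ r : SmithAlgebra f, r ∈ Psub f ⊔ Isub f c := by
  apply stab_top
  · exact Submodule.mem_sup_left (Submodule.subset_span ⟨0, 1, by simp⟩)
  · -- E stability
    apply sup_mul
    intro a p
    have h1 : E * (Ω ^ a * aeval H p) =
        (Ω ^ a * aeval H (p.comp (X - 1))) * (SmithE f - c₀)
          + c • (Ω ^ a * aeval H (p.comp (X - 1))) := by
      rw [← mul_assoc, ((omega_commute f (SmithE f)).pow_right a).eq, mul_assoc, e_aeval,
        ← mul_assoc, mul_sub, Algebra.smul_def, Algebra.commutes c, sub_add_cancel]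
    rw [h1]
    exact Submodule.add_mem _
      (Submodule.mem_sup_right (Submodule.subset_span ⟨_, rfl⟩))
      (Submodule.smul_mem _ _ (Submodule.mem_sup_left (Submodule.subset_span ⟨a, _, rfl⟩)))
  · -- F stability
    apply sup_mul
    intro a p
    have hB : F * (Ω ^ a * aeval H p) = (Ω ^ a * aeval H (p.comp (X + 1))) * F := by
      rw [← mul_assoc, ((omega_commute f (SmithF f)).pow_right a).eq, mul_assoc, f_aeval,
        ← mul_assoc]
    set B : SmithAlgebra f := Ω ^ a * aeval H (p.comp (X + 1)) with hBdef
    set W : SmithAlgebra f := aeval H ((uP f).comp (X + 1)) with hWdef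
    have key2 : B * Ω - B * W - 2 * (B * F * (SmithE f - c₀)) = 2 * (B * F * c₀) := by
      rw [SmithOmega, ← hWdef]
      simp only [mul_add, mul_sub, two_mul, add_mul, mul_assoc]
      abel
    have key3 : B * F = (2 * c)⁻¹ • (B * Ω - B * W - 2 * (B * F * (SmithE f - c₀))) := by
      rw [key2]
      have : (2 : SmithAlgebra f) * (B * F * c₀) = (2 * c) • (B * F) := by
        rw [Algebra.smul_def, map_mul, map_ofNat, mul_assoc 2 _ (B * F),
          Algebra.commutes c (B * F)]
      rw [this, smul_smul, inv_mul_cancel₀ (by simpa using mul_ne_zero two_ne_zero hc),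
        one_smul]
    rw [hB, key3]
    refine Submodule.smul_mem _ _ (Submodule.sub_mem _ (Submodule.sub_mem _ ?_ ?_) ?_)
    · -- B * Ω ∈ P
      have : B * Ω = Ω ^ (a + 1) * aeval H (p.comp (X + 1)) := by
        rw [hBdef, mul_assoc, (omega_commute f (aeval H (p.comp (X + 1)))).eq,
          ← mul_assoc, ← pow_succ]
      rw [this]
      exact Submodule.mem_sup_left (Submodule.subset_span ⟨a + 1, _, rfl⟩)
    · -- B * W ∈ P
      have : B * W = Ω ^ a * aeval H (p.comp (X + 1) * (uP f).comp (X + 1)) := by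
        rw [hBdef, hWdef, mul_assoc, map_mul]
      rw [this]
      exact Submodule.mem_sup_left (Submodule.subset_span ⟨a, _, rfl⟩)
    · -- 2 * (B * F * (E - c₀)) ∈ I
      exact Submodule.mem_sup_right
        (Isub_mul f c 2 _ (Submodule.subset_span ⟨B * F, rfl⟩))
  · -- H stability
    apply sup_mul
    intro a p
    have h1 : H * (Ω ^ a * aeval H p) = Ω ^ a * aeval H (X * p) := by
      rw [← mul_assoc, ((omega_commute f (SmithH f)).pow_right a).eq, mul_assoc,
        map_mul, aeval_X]
    rw [h1]
    exact Submodule.mem_sup_left (Submodule.subset_span ⟨a, _, rfl⟩)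

end

section deltapoly

lemma xsub1 : (X - 1 : ℂ[X]) = X + C (-1) := by
  simp [map_neg]
  ring

lemma delta_coeff (b m : ℕ) :
    ((X - 1 : ℂ[X]) ^ b - X ^ b).coeff m =
      (-1 : ℂ) ^ (b - m) * (b.choose m : ℂ) - if m = b then 1 else 0 := by
  rw [coeff_sub, xsub1, coeff_X_add_C_pow, coeff_X_pow]

lemma delta_natDegree_lt {b n : ℕ} (hb : b ≤ n) (hn : 1 ≤ n) :
    ((X - 1 : ℂ[X]) ^ b - X ^ b).natDegree < n := by
  have h : ((X - 1 : ℂ[X]) ^ b - X ^ b).natDegree ≤ n - 1 := by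
    rw [natDegree_le_iff_coeff_eq_zero]
    intro m hm
    have hm' : n ≤ m := by omega
    rw [delta_coeff]
    rcases lt_or_eq_of_le (hb.trans hm') with h1 | h1
    · rw [Nat.choose_eq_zero_of_lt h1, if_neg (by omega)]
      simp
    · rw [← h1, Nat.choose_self, if_pos rfl, Nat.sub_self]
      simp
  omega

lemma delta_coeff_lt {b n : ℕ} (hb : b < n) :
    ((X - 1 : ℂ[X]) ^ b - X ^ b).coeff (n - 1) = 0 := by
  rw [delta_coeff]
  rcases Nat.lt_or_ge b (n - 1) with h1 | h1
  · rw [Nat.choose_eq_zero_of_lt h1, if_neg (by omega)]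
    simp
  · have hbe : b = n - 1 := by omega
    rw [if_pos hbe.symm, hbe, Nat.choose_self, Nat.sub_self]
    simp

lemma delta_coeff_eq {n : ℕ} (hn : 1 ≤ n) :
    ((X - 1 : ℂ[X]) ^ n - X ^ n).coeff (n - 1) = -(n : ℂ) := by
  obtain ⟨m, rfl⟩ := Nat.exists_eq_add_of_le hn
  rw [delta_coeff, if_neg (by omega)]
  have h1 : 1 + m - (1 + m - 1) = 1 := by omega
  have h2 : 1 + m - 1 = m := by omega
  rw [h1, h2, pow_one]
  have : (1 + m).choose m = m + 1 := by
    rw [Nat.add_comm]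
    exact Nat.choose_succ_self_right m
  rw [this]
  push_cast
  ring

end deltapoly

section whittaker

variable {V : Type} [AddCommGroup V] [Module (SmithAlgebra f) V]

local notation "A" a => algebraMap ℂ (SmithAlgebra f) a

lemma smul_alg_smul (a : ℂ) (r : SmithAlgebra f) (x : V) :
    (a • r) • x = r • ((A a) • x) := by
  rw [Algebra.smul_def, Algebra.commutes, mul_smul]

lemma eswap (a : ℂ) (x : V) : SmithE f • ((A a) • x) = (A a) • (SmithE f • x) := by
  rw [smul_smul, smul_smul, ← Algebra.commutes]

lemma algswap (a b : ℂ) (x : V) : (A a) • ((A b) • x) = (A b) • ((A a) • x) := by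
  rw [smul_smul, smul_smul, ← map_mul, ← map_mul, mul_comm]

lemma whit_key (c : ℂ) (hc : c ≠ 0) :
    ∀ (n : ℕ) (v : ℕ → V),
      (∀ b, SmithE f • v b = (A c) • v b) →
      (∑ b ∈ Finset.range n, (SmithH f) ^ b • v b) = 0 → ∀ b < n, v b = 0 := by
  intro n
  induction n with
  | zero => intro v _ _ b hb; exact absurd hb (Nat.not_lt_zero b)
  | succ n ih =>
    intro v hv hsum
    by_cases hn : n = 0
    · subst hn
      intro b hb
      have hb0 : b = 0 := by omega
      subst hb0
      simpa using hsum
    · have hn1 : 1 ≤ n := Nat.one_le_iff_ne_zero.mpr hn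
      have hEH : ∀ b : ℕ, SmithE f * (SmithH f) ^ b =
          aeval (SmithH f) ((X - 1 : ℂ[X]) ^ b) * SmithE f := by
        intro b
        have h := e_aeval f (X ^ b)
        rw [map_pow, aeval_X, pow_comp, X_comp] at h
        exact h
      have hE : ∑ b ∈ Finset.range (n+1),
          aeval (SmithH f) ((X - 1 : ℂ[X]) ^ b) • ((A c) • v b) = 0 := by
        have h0 : ∑ b ∈ Finset.range (n+1), SmithE f • ((SmithH f) ^ b • v b) = 0 := by
          rw [← Finset.smul_sum, hsum, smul_zero]
        rw [← h0]
        refine Finset.sum_congr rfl fun b _ => ?_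
        conv_rhs => rw [smul_smul, hEH b, mul_smul, hv b]
      have hC : ∑ b ∈ Finset.range (n+1),
          (SmithH f) ^ b • ((A c) • v b) = 0 := by
        have h0 : (A c) • (∑ b ∈ Finset.range (n+1), (SmithH f) ^ b • v b) = 0 := by
          rw [hsum, smul_zero]
        rw [Finset.smul_sum] at h0
        rw [← h0]
        refine Finset.sum_congr rfl fun b _ => ?_
        rw [smul_smul, smul_smul, Algebra.commutes]
      have hD : ∑ b ∈ Finset.range (n+1),
          aeval (SmithH f) ((X - 1 : ℂ[X]) ^ b - X ^ b) • ((A c) • v b) = 0 := by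
        have hterm : ∀ b ∈ Finset.range (n+1),
            aeval (SmithH f) ((X - 1 : ℂ[X]) ^ b - X ^ b) • ((A c) • v b) =
              aeval (SmithH f) ((X - 1 : ℂ[X]) ^ b) • ((A c) • v b)
                - (SmithH f) ^ b • ((A c) • v b) := by
          intro b _
          rw [map_sub, sub_smul,
            show (aeval (SmithH f) (X ^ b : ℂ[X])) = (SmithH f) ^ b by rw [map_pow, aeval_X]]
        rw [Finset.sum_congr rfl hterm, Finset.sum_sub_distrib, hE, hC, sub_zero]
      set v' : ℕ → V := fun j => ∑ b ∈ Finset.range (n+1),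
        (A (((X - 1 : ℂ[X]) ^ b - X ^ b).coeff j)) • ((A c) • v b) with hv'
      have hsum' : ∑ j ∈ Finset.range n, (SmithH f) ^ j • v' j = 0 := by
        rw [← hD, hv']
        simp only [Finset.smul_sum]
        rw [Finset.sum_comm]
        refine Finset.sum_congr rfl fun b hb => ?_
        have hblt : b ≤ n := by
          simpa [Nat.lt_succ_iff] using Finset.mem_range.mp hb
        rw [aeval_eq_sum_range' (delta_natDegree_lt hblt hn1), Finset.sum_smul]
        refine Finset.sum_congr rfl fun j _ => ?_
        rw [smul_alg_smul]
      have hv'whit : ∀ j, SmithE f • v' j = (A c) • v' j := by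
        intro j
        rw [hv']
        rw [Finset.smul_sum, Finset.smul_sum]
        refine Finset.sum_congr rfl fun b _ => ?_
        rw [eswap, eswap, hv b, algswap]
      have hvn : v n = 0 := by
        have h1 : v' (n-1) = 0 := ih v' hv'whit hsum' (n-1) (by omega)
        have h2 : v' (n-1) = (A (-(n : ℂ))) • ((A c) • v n) := by
          rw [hv']
          beta_reduce
          rw [Finset.sum_eq_single n]
          · rw [delta_coeff_eq hn1]
          · intro b hb hbn
            have : b < n := by
              have := Finset.mem_range.mp hb; omega
            rw [delta_coeff_lt this]
            simp
          · intro h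
            exact absurd (Finset.self_mem_range_succ n) h
        rw [h2, smul_smul, ← map_mul] at h1
        have h3 : (A ((-(n:ℂ) * c)⁻¹)) • ((A (-(n:ℂ) * c)) • v n) = 0 := by
          rw [h1, smul_zero]
        rw [smul_smul, ← map_mul, inv_mul_cancel₀, map_one, one_smul] at h3
        · exact h3
        · exact mul_ne_zero (by exact_mod_cast neg_ne_zero.mpr (Nat.cast_ne_zero.mpr hn : (n:ℂ) ≠ 0)) hc
      intro b hb
      rcases Nat.lt_succ_iff_lt_or_eq.mp hb with h | h
      · have hsum'' : ∑ b ∈ Finset.range n, (SmithH f) ^ b • v b = 0 := by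
          rw [Finset.sum_range_succ, hvn, smul_zero, add_zero] at hsum
          exact hsum
        exact ih v hv hsum'' b h
      · rw [h]; exact hvn

lemma rswap (r : SmithAlgebra f) (a : ℂ) (x : V) :
    r • ((A a) • x) = (A a) • (r • x) := by
  rw [smul_smul, ← Algebra.commutes, mul_smul]

lemma aevalE_smul (c : ℂ) (w : V) (hw : SmithE f • w = (A c) • w) (p : ℂ[X]) :
    aeval (SmithE f) p • w = (A (p.eval c)) • w := by
  have hpow : ∀ k : ℕ, (SmithE f) ^ k • w = (A (c ^ k)) • w := by
    intro k
    induction k with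
    | zero => simp
    | succ k ihk =>
        rw [pow_succ, mul_smul, hw, rswap, ihk, smul_smul, ← map_mul, ← pow_succ']
  rw [aeval_eq_sum_range, Finset.sum_smul, eval_eq_sum_range]
  have : ∀ b ∈ Finset.range (p.natDegree + 1),
      (p.coeff b • (SmithE f) ^ b) • w = (A (p.coeff b * c ^ b)) • w := by
    intro b _
    rw [smul_alg_smul, rswap, hpow, smul_smul, ← map_mul]
  rw [Finset.sum_congr rfl this, ← Finset.sum_smul, ← map_sum]

end whittaker

lemma Psub_structured : ∀ m ∈ Psub f, ∃ (N : ℕ) (g : ℕ → ℂ[X]),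
    m = ∑ b ∈ Finset.range N, (SmithH f) ^ b * aeval (SmithOmega f (uP f)) (g b) := by
  have pad : ∀ (N N' : ℕ) (g : ℕ → ℂ[X]), N ≤ N' →
      ∑ b ∈ Finset.range N, (SmithH f) ^ b * aeval (SmithOmega f (uP f)) (g b) =
      ∑ b ∈ Finset.range N', (SmithH f) ^ b *
        aeval (SmithOmega f (uP f)) (if b < N then g b else 0) := by
    intro N N' g hN
    rw [Finset.sum_congr rfl (g := fun b => (SmithH f) ^ b *
        aeval (SmithOmega f (uP f)) (if b < N then g b else 0))
      (fun b hb => by beta_reduce; rw [if_pos (Finset.mem_range.mp hb)])]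
    refine Finset.sum_subset (Finset.range_subset.mpr (fun x hx => Finset.mem_range.mpr (by omega))) ?_
    intro b _ hb
    rw [if_neg (by simpa using hb)]
    simp
  intro m hm
  induction hm using Submodule.span_induction with
  | mem x hx =>
      obtain ⟨a, p, rfl⟩ := hx
      refine ⟨p.natDegree + 1, fun b => C (p.coeff b) * X ^ a, ?_⟩
      rw [aeval_eq_sum_range, Finset.mul_sum]
      refine Finset.sum_congr rfl fun b _ => ?_
      rw [mul_smul_comm, map_mul, aeval_C, aeval_X_pow, ← mul_assoc,
        ← Algebra.commutes, ← Algebra.smul_def, smul_mul_assoc,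
        ((omega_commute f ((SmithH f) ^ b)).pow_right a).eq]
  | zero => exact ⟨0, fun _ => 0, by simp⟩
  | add x y hx hy ihx ihy =>
      obtain ⟨N₁, g₁, rfl⟩ := ihx
      obtain ⟨N₂, g₂, rfl⟩ := ihy
      refine ⟨max N₁ N₂, fun b =>
        (if b < N₁ then g₁ b else 0) + (if b < N₂ then g₂ b else 0), ?_⟩
      rw [pad N₁ (max N₁ N₂) g₁ (le_max_left _ _), pad N₂ (max N₁ N₂) g₂ (le_max_right _ _),
        ← Finset.sum_add_distrib]
      refine Finset.sum_congr rfl fun b _ => ?_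
      rw [map_add, mul_add]
  | smul a x hx ihx =>
      obtain ⟨N, g, rfl⟩ := ihx
      refine ⟨N, fun b => C a * g b, ?_⟩
      rw [Finset.smul_sum]
      refine Finset.sum_congr rfl fun b _ => ?_
      rw [map_mul, aeval_C, ← Algebra.smul_def, mul_smul_comm]

end SmithAux

open SmithAux

/-- Let `V = R·w` be a Whittaker module of type `η` (where `η(E) = c ≠ 0`).  Then the
annihilator of the cyclic Whittaker vector `w` is `R·Z_V + R·R_η(E)`, i.e. the left ideal
generated by `Z_V = Ann_{Z(R)}(V)` together with `ker η ⊆ ℂ[E]`. -/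
theorem smith_annihilator_of_cyclic_whittaker_vector (f : ℂ[X]) (c : ℂ) (hc : c ≠ 0)
    (V : Type) [AddCommGroup V] [Module (SmithAlgebra f) V] (w : V)
    (hw : SmithE f • w = algebraMap ℂ (SmithAlgebra f) c • w)
    (hcyc : ∀ v : V, ∃ r : SmithAlgebra f, v = r • w) :
    {r : SmithAlgebra f | r • w = 0} =
      (Submodule.span (SmithAlgebra f)
        ({z | z ∈ Subalgebra.center ℂ (SmithAlgebra f) ∧ ∀ v : V, z • v = 0} ∪
         {x | ∃ p : ℂ[X], p.eval c = 0 ∧ x = aeval (SmithE f) p}) :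
        Submodule (SmithAlgebra f) (SmithAlgebra f)) := by
  classical
  ext r
  simp only [Set.mem_setOf_eq, SetLike.mem_coe]
  constructor
  · intro hr
    obtain ⟨m, hm, i, hi, rfl⟩ := Submodule.mem_sup.mp (sup_eq_top f c hc r)
    have hIw : ∀ x ∈ Isub f c, x • w = 0 := by
      intro x hx
      induction hx using Submodule.span_induction with
      | mem x hx =>
          obtain ⟨s, rfl⟩ := hx
          rw [mul_smul, sub_smul, hw, sub_self, smul_zero]
      | zero => rw [zero_smul]
      | add x y _ _ h1 h2 => rw [add_smul, h1, h2, add_zero]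
      | smul a x _ h1 => rw [Algebra.smul_def, mul_smul, h1, smul_zero]
    have hiw : i • w = 0 := hIw i hi
    have hmw : m • w = 0 := by rwa [add_smul, hiw, add_zero] at hr
    obtain ⟨N, g, rfl⟩ := Psub_structured f m hm
    have hfam : ∀ b, SmithE f • (aeval (SmithOmega f (uP f)) (g b) • w)
        = algebraMap ℂ (SmithAlgebra f) c • (aeval (SmithOmega f (uP f)) (g b) • w) := by
      intro b
      rw [smul_smul, (commute_aeval (omega_commute f (SmithE f)) (g b)).eq, mul_smul, hw,
        rswap]
    have hzero : ∀ b < N, aeval (SmithOmega f (uP f)) (g b) • w = 0 := by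
      apply whit_key f c hc N (fun b => aeval (SmithOmega f (uP f)) (g b) • w) hfam
      rw [Finset.sum_smul] at hmw
      rw [← hmw]
      exact Finset.sum_congr rfl fun b _ => (mul_smul _ _ _).symm
    have hz : ∀ b < N, aeval (SmithOmega f (uP f)) (g b) ∈
        {z : SmithAlgebra f | z ∈ Subalgebra.center ℂ (SmithAlgebra f) ∧ ∀ v : V, z • v = 0} := by
      intro b hb
      have hcen : aeval (SmithOmega f (uP f)) (g b) ∈ Subalgebra.center ℂ (SmithAlgebra f) := by
        have h1 : Algebra.adjoin ℂ {SmithOmega f (uP f)} ≤ Subalgebra.center ℂ (SmithAlgebra f) :=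
          Algebra.adjoin_le (Set.singleton_subset_iff.mpr (omega_center f))
        exact h1 (Polynomial.aeval_mem_adjoin_singleton ℂ _)
      refine ⟨hcen, fun v => ?_⟩
      obtain ⟨s, rfl⟩ := hcyc v
      rw [smul_smul, ← Subalgebra.mem_center_iff.mp hcen s, mul_smul, hzero b hb, smul_zero]
    refine Submodule.add_mem _ ?_ ?_
    · refine Submodule.sum_mem _ fun b hb => ?_
      rw [show (SmithH f) ^ b * aeval (SmithOmega f (uP f)) (g b)
          = (SmithH f) ^ b • aeval (SmithOmega f (uP f)) (g b) from rfl]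
      exact Submodule.smul_mem _ _
        (Submodule.subset_span (Set.mem_union_left _ (hz b (Finset.mem_range.mp hb))))
    · have hIJ : ∀ x ∈ Isub f c, x ∈ Submodule.span (SmithAlgebra f)
          ({z | z ∈ Subalgebra.center ℂ (SmithAlgebra f) ∧ ∀ v : V, z • v = 0} ∪
           {x | ∃ p : ℂ[X], p.eval c = 0 ∧ x = aeval (SmithE f) p}) := by
        intro x hx
        induction hx using Submodule.span_induction with
        | mem x hx =>
            obtain ⟨s, rfl⟩ := hx
            have hgen : SmithE f - algebraMap ℂ (SmithAlgebra f) c ∈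
                {x : SmithAlgebra f | ∃ p : ℂ[X], p.eval c = 0 ∧ x = aeval (SmithE f) p} :=
              ⟨X - C c, by simp, by rw [map_sub, aeval_X, aeval_C]⟩
            rw [show s * (SmithE f - algebraMap ℂ (SmithAlgebra f) c)
                = s • (SmithE f - algebraMap ℂ (SmithAlgebra f) c) from rfl]
            exact Submodule.smul_mem _ _
              (Submodule.subset_span (Set.mem_union_right _ hgen))
        | zero => exact Submodule.zero_mem _
        | add x y _ _ h1 h2 => exact Submodule.add_mem _ h1 h2
        | smul a x _ h1 =>
            rw [Algebra.smul_def, show algebraMap ℂ (SmithAlgebra f) a * x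
              = algebraMap ℂ (SmithAlgebra f) a • x from rfl]
            exact Submodule.smul_mem _ _ h1
      exact hIJ i hi
  · intro hr
    induction hr using Submodule.span_induction with
    | mem x hx =>
        rcases hx with hx | ⟨p, hp, rfl⟩
        · exact hx.2 w
        · rw [aevalE_smul f c w hw p, hp, map_zero, zero_smul]
    | zero => rw [zero_smul]
    | add x y _ _ h1 h2 => rw [add_smul, h1, h2, add_zero]
    | smul a x _ h1 => rw [smul_eq_mul, mul_smul, h1, smul_zero]
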